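/- Let p ≥ 3 be odd and a > 0. Let K be the (p−1) × (p−1) tridiagonal matrix with 2 on the diagonal and −1 on the sub- and superdiagonal, let M = diag(m_1,…,m_{p−1}) with m_j = 1 for j odd and m_j = 1/a for j even, and set B = M^{−1}K. Then the characteristic polynomial of B equals ∏_{j=1}^{(p−1)/2} (X² − (2+2a)X + 4a sin²(πj/p)). Equivalently, the eigenvalues of B come in pairs λ_{2j−1}, λ_{2j} which are the eigenvalues of the 2 × 2 matrix with rows (2a, 2a cos(πj/p)) and (2 cos(πj/p), 2), for j = 1,…,(p−1)/2; in particular λ_{2j−1} + λ_{2j} = 2 + 2a for every j. -/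

import Mathlib

open Polynomial


-- === auxiliary lemmas (already verified above, reuse) ===
lemma charpoly_eval_eq (k : ℕ) (M : Matrix (Fin k) (Fin k) ℝ) (r : ℝ) :
    M.charpoly.eval r = (Matrix.scalar (Fin k) r - M).det := by
  rw [Matrix.charpoly, eval_det, Matrix.matPolyEquiv_charmatrix]
  simp

lemma isRoot_charpoly_of_eig (k : ℕ) (M : Matrix (Fin k) (Fin k) ℝ) (r : ℝ)
    (v : Fin k → ℝ) (hv : v ≠ 0) (h : M.mulVec v = r • v) : M.charpoly.IsRoot r := by
  have hdet : (Matrix.scalar (Fin k) r - M).det = 0 := by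
    rw [← Matrix.exists_mulVec_eq_zero_iff]
    refine ⟨v, hv, ?_⟩
    rw [Matrix.sub_mulVec, h, Matrix.scalar_apply]
    ext i
    simp [Matrix.mulVec_diagonal]
  rw [Polynomial.IsRoot, charpoly_eval_eq, hdet]

lemma tridiag_sum (n : ℕ) (w : ℕ → ℝ) (hw0 : w 0 = 0) (hwn : w (n + 1) = 0) (i : Fin n) :
    ∑ j : Fin n,
      (if i = j then (2:ℝ) else if i.1 + 1 = j.1 ∨ j.1 + 1 = i.1 then -1 else 0) * w (j.1 + 1)
      = 2 * w (i.1 + 1) - w i.1 - w (i.1 + 2) := by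
  have hstep : ∀ j : Fin n,
      (if i = j then (2:ℝ) else if i.1 + 1 = j.1 ∨ j.1 + 1 = i.1 then -1 else 0) * w (j.1 + 1)
      = (fun k : ℕ => (if k = i.1 then 2 * w (i.1+1) else 0)
          + (if k = i.1 + 1 then -(w (i.1+2)) else 0)
          + (if k + 1 = i.1 then -(w i.1) else 0)) j.1 := by
    intro j
    simp only [Fin.ext_iff]
    split_ifs with h1 h2 h3 h4 h5 h6 h7 h8 h9 h10 h11 h12 h13 h14 <;>
      first
        | omega
        | ring1
        | (rw [show (j:ℕ) + 1 = (i:ℕ) + 1 by omega]; ring1)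
        | (rw [show (j:ℕ) + 1 = (i:ℕ) + 2 by omega]; ring1)
        | (rw [show (j:ℕ) + 1 = (i:ℕ) by omega]; ring1)
  rw [Finset.sum_congr rfl fun j _ => hstep j]
  rw [Fin.sum_univ_eq_sum_range (fun k : ℕ => (if k = i.1 then 2 * w (i.1+1) else 0)
          + (if k = i.1 + 1 then -(w (i.1+2)) else 0)
          + (if k + 1 = i.1 then -(w i.1) else 0)) n]
  rw [Finset.sum_add_distrib, Finset.sum_add_distrib]
  have S1 : ∑ k ∈ Finset.range n, (if k = i.1 then 2 * w (i.1+1) else 0) = 2 * w (i.1+1) := by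
    rw [Finset.sum_ite_eq' (Finset.range n) i.1 (fun _ => 2 * w (i.1+1))]
    simp [i.isLt]
  have S2 : ∑ k ∈ Finset.range n, (if k = i.1 + 1 then -(w (i.1+2)) else 0) = -(w (i.1+2)) := by
    rw [Finset.sum_ite_eq' (Finset.range n) (i.1+1) (fun _ => -(w (i.1+2)))]
    by_cases h : i.1 + 1 < n
    · simp [h]
    · rw [if_neg (by simp; omega)]
      rw [show i.1 + 2 = n + 1 by omega, hwn]
      ring
  have S3 : ∑ k ∈ Finset.range n, (if k + 1 = i.1 then -(w i.1) else 0) = -(w i.1) := by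
    by_cases hi : (i:ℕ) = 0
    · rw [Finset.sum_eq_zero]
      · rw [hi, hw0]; ring
      · intro k _; rw [if_neg (by omega)]
    · have : ∀ k ∈ Finset.range n, (if k + 1 = i.1 then -(w i.1) else 0)
          = (if k = i.1 - 1 then -(w i.1) else 0) := by
        intro k _
        congr 1
        simp only [eq_iff_iff]
        omega
      rw [Finset.sum_congr rfl this,
        Finset.sum_ite_eq' (Finset.range n) (i.1-1) (fun _ => -(w i.1))]
      rw [if_pos (Finset.mem_range.2 (by omega))]
  rw [S1, S2, S3]; ring

lemma mulVec_eig (n : ℕ) (a θ l : ℝ)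
    (hsinp : Real.sin ((n + 1 : ℕ) * θ) = 0)
    (hq : l ^ 2 - (2 + 2 * a) * l + 4 * a * Real.sin θ ^ 2 = 0) :
    (Matrix.of fun i j : Fin n =>
        (if i.val % 2 = 0 then (1 : ℝ) else a) *
          (if i = j then 2
            else if i.val + 1 = j.val ∨ j.val + 1 = i.val then -1 else 0)).mulVec
      (fun i => (if (i.val + 1) % 2 = 1 then -2 * Real.cos θ else l - 2) *
          Real.sin ((i.val + 1 : ℕ) * θ))
      = l • (fun i => (if (i.val + 1) % 2 = 1 then -2 * Real.cos θ else l - 2) *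
          Real.sin ((i.val + 1 : ℕ) * θ)) := by
  set w : ℕ → ℝ := fun k =>
    (if k % 2 = 1 then -2 * Real.cos θ else l - 2) * Real.sin ((k : ℕ) * θ) with hw
  have hw0 : w 0 = 0 := by simp [hw]
  have hwn : w (n + 1) = 0 := by
    push_cast at hsinp
    simp [hw, hsinp]
  funext i
  have hsum : ∀ i : Fin n, (Matrix.of fun i j : Fin n =>
        (if i.val % 2 = 0 then (1 : ℝ) else a) *
          (if i = j then 2
            else if i.val + 1 = j.val ∨ j.val + 1 = i.val then -1 else 0)).mulVec
            (fun j => w (j.val + 1)) i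
      = (if i.val % 2 = 0 then (1 : ℝ) else a) *
          (2 * w (i.1 + 1) - w i.1 - w (i.1 + 2)) := by
    intro i
    rw [Matrix.mulVec, dotProduct]
    simp only [Matrix.of_apply]
    simp only [mul_assoc]
    rw [← Finset.mul_sum]
    rw [tridiag_sum n w hw0 hwn i]
  have hv : (fun i : Fin n => (if (i.val + 1) % 2 = 1 then -2 * Real.cos θ else l - 2) *
      Real.sin ((i.val + 1 : ℕ) * θ)) = fun j : Fin n => w (j.val + 1) := rfl
  rw [hv, hsum i, Pi.smul_apply, smul_eq_mul]
  have e0 : ((i.val : ℕ) : ℝ) * θ = ((i.val + 1 : ℕ) : ℝ) * θ - θ := by push_cast; ring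
  have e2 : ((i.val + 2 : ℕ) : ℝ) * θ = ((i.val + 1 : ℕ) : ℝ) * θ + θ := by push_cast; ring
  simp only [hw]
  rcases Nat.even_or_odd i.val with he | he
  · have h1 : i.val % 2 = 0 := Nat.even_iff.mp he
    rw [if_pos h1, if_pos (show (i.val + 1) % 2 = 1 by omega),
      if_neg (show ¬(i.val % 2 = 1) by omega),
      if_neg (show ¬((i.val + 2) % 2 = 1) by omega),
      e0, e2, Real.sin_sub, Real.sin_add]
    ring1
  · have h1 : i.val % 2 = 1 := Nat.odd_iff.mp he
    rw [if_neg (show ¬(i.val % 2 = 0) by omega),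
      if_neg (show ¬((i.val + 1) % 2 = 1) by omega),
      if_pos h1,
      if_pos (show (i.val + 2) % 2 = 1 by omega),
      e0, e2, Real.sin_sub, Real.sin_add]
    linear_combination (-Real.sin (((i.val + 1 : ℕ) : ℝ) * θ)) * hq +
      (4 * a * Real.sin (((i.val + 1 : ℕ) : ℝ) * θ)) * Real.sin_sq_add_cos_sq θ

noncomputable def discAux (p : ℕ) (a : ℝ) (j : ℕ) : ℝ :=
  (1 + a) ^ 2 - 4 * a * Real.sin (Real.pi * j / p) ^ 2

noncomputable def lpAux (p : ℕ) (a : ℝ) (j : ℕ) : ℝ := 1 + a + Real.sqrt (discAux p a j)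

noncomputable def lmAux (p : ℕ) (a : ℝ) (j : ℕ) : ℝ := 1 + a - Real.sqrt (discAux p a j)


/-- For odd `p ≥ 3`, the characteristic polynomial of `B = M⁻¹K`, where `K` is
the `(p-1) × (p-1)` tridiagonal second-difference matrix and
`M = diag(m_1, …, m_{p-1})` with `m_j = 1` for `j` odd, `m_j = 1/a` for `j`
even (so row `j` of `K` is multiplied by `1` or `a` according to parity;
row `j` corresponds to the `Fin (p-1)` index `j - 1`), equals
`∏_{j=1}^{(p-1)/2} (X² - (2+2a)X + 4a sin²(πj/p))`.  Equivalently, the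
eigenvalues of `B` come in pairs `λ_{2j-1}, λ_{2j}` which are the eigenvalues
of the 2×2 matrix `!![2a, 2a cos(πj/p); 2 cos(πj/p), 2]` (whose characteristic
polynomial is the corresponding quadratic factor); in particular
`λ_{2j-1} + λ_{2j} = 2 + 2a` for every `j`. -/
theorem charpoly_reduced_system (p : ℕ) (hodd : Odd p) (hp : 3 ≤ p) (a : ℝ)
    (ha : 0 < a) :
    (Matrix.of fun i j : Fin (p - 1) =>
        (if i.val % 2 = 0 then (1 : ℝ) else a) *
          (if i = j then 2
            else if i.val + 1 = j.val ∨ j.val + 1 = i.val then -1 else 0)).charpoly =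
      ∏ j ∈ Finset.Icc 1 ((p - 1) / 2),
        (X ^ 2 - C (2 + 2 * a) * X +
          C (4 * a * Real.sin (Real.pi * j / p) ^ 2)) ∧
    ∀ j ∈ Finset.Icc 1 ((p - 1) / 2),
      Matrix.charpoly
          (!![2 * a, 2 * a * Real.cos (Real.pi * j / p);
              2 * Real.cos (Real.pi * j / p), 2]) =
        X ^ 2 - C (2 + 2 * a) * X + C (4 * a * Real.sin (Real.pi * j / p) ^ 2) := by
  have hp0 : (0:ℝ) < p := by positivity
  have hpm : p - 1 = 2 * ((p - 1) / 2) := by obtain ⟨t, ht⟩ := hodd; omega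
  -- basic trig facts for j in range
  have facts : ∀ j ∈ Finset.Icc 1 ((p - 1) / 2),
      0 < Real.sin (Real.pi * j / p) ∧ Real.sin (Real.pi * j / p) < 1 ∧
      0 < Real.cos (Real.pi * j / p) ∧ 0 < discAux p a j := by
    intro j hj
    obtain ⟨hj1, hj2⟩ := Finset.mem_Icc.mp hj
    set θ := Real.pi * j / p with hθ
    have hθpos : 0 < θ :=
      div_pos (mul_pos Real.pi_pos (by exact_mod_cast hj1)) hp0
    have h2j : 2 * j < p := by omega
    have hθlt : θ < Real.pi / 2 := by
      rw [hθ, div_lt_div_iff₀ hp0 two_pos]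
      have : (2 * j : ℝ) < p := by exact_mod_cast h2j
      nlinarith [Real.pi_pos]
    have hsinpos : 0 < Real.sin θ := Real.sin_pos_of_pos_of_lt_pi hθpos
      (hθlt.trans (by linarith [Real.pi_pos]))
    have hsinlt : Real.sin θ < 1 := by
      have := Real.strictMonoOn_sin
        (Set.mem_Icc.mpr ⟨by linarith [Real.pi_pos], hθlt.le⟩)
        (Set.mem_Icc.mpr ⟨by linarith [Real.pi_pos], le_refl _⟩) hθlt
      simpa using this
    have hcpos : 0 < Real.cos θ := Real.cos_pos_of_mem_Ioo
      ⟨by linarith [Real.pi_pos], hθlt⟩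
    refine ⟨hsinpos, hsinlt, hcpos, ?_⟩
    have : 0 < (1+a)^2 - 4*a*Real.sin θ^2 := by
      nlinarith [sq_nonneg (1-a),
        mul_pos ha (mul_pos (sub_pos.mpr hsinlt) (show (0:ℝ) < 1 + Real.sin θ by linarith))]
    simpa [discAux, hθ] using this
  have hrpos : ∀ j ∈ Finset.Icc 1 ((p - 1) / 2), 0 < Real.sqrt (discAux p a j) :=
    fun j hj => Real.sqrt_pos.mpr (facts j hj).2.2.2
  have hrsq : ∀ j ∈ Finset.Icc 1 ((p - 1) / 2),
      Real.sqrt (discAux p a j) ^ 2 = discAux p a j :=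
    fun j hj => Real.sq_sqrt (facts j hj).2.2.2.le
  -- injectivity of sqrt disc
  have hinj : ∀ j ∈ Finset.Icc 1 ((p - 1) / 2), ∀ k ∈ Finset.Icc 1 ((p - 1) / 2),
      Real.sqrt (discAux p a j) = Real.sqrt (discAux p a k) → j = k := by
    intro j hj k hk h
    have hd : discAux p a j = discAux p a k := by
      rw [← hrsq j hj, ← hrsq k hk, h]
    have hsin : Real.sin (Real.pi * j / p) = Real.sin (Real.pi * k / p) := by
      have h1 := (facts j hj).1
      have h2 := (facts k hk).1
      simp only [discAux] at hd
      have h3 : (Real.sin (Real.pi * j / p) - Real.sin (Real.pi * k / p)) *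
          (Real.sin (Real.pi * j / p) + Real.sin (Real.pi * k / p)) = 0 := by
        have h4 : Real.sin (Real.pi * j / p) ^ 2 = Real.sin (Real.pi * k / p) ^ 2 := by
          have h5 : 4 * a * Real.sin (Real.pi * j / p) ^ 2
              = 4 * a * Real.sin (Real.pi * k / p) ^ 2 := by linarith
          have h6 : (4 * a : ℝ) ≠ 0 := by positivity
          exact mul_left_cancel₀ h6 h5
        linear_combination h4
      rcases mul_eq_zero.mp h3 with h | h
      · linarith
      · linarith
    obtain ⟨hj1, hj2⟩ := Finset.mem_Icc.mp hj
    obtain ⟨hk1, hk2⟩ := Finset.mem_Icc.mp hk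
    have hmem : ∀ i : ℕ, i ∈ Finset.Icc 1 ((p - 1) / 2) →
        Real.pi * i / p ∈ Set.Icc (-(Real.pi/2)) (Real.pi/2) := by
      intro i hi
      obtain ⟨hi1, hi2⟩ := Finset.mem_Icc.mp hi
      constructor
      · have : (0:ℝ) ≤ Real.pi * i / p := by positivity
        linarith [Real.pi_pos]
      · rw [div_le_div_iff₀ hp0 two_pos]
        have : (2 * i : ℝ) ≤ p := by exact_mod_cast (by omega : 2 * i ≤ p)
        nlinarith [Real.pi_pos]
    have hθeq : Real.pi * j / p = Real.pi * k / p :=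
      Real.injOn_sin (hmem j hj) (hmem k hk) hsin
    field_simp at hθeq
    exact_mod_cast hθeq
  constructor
  · -- main statement
    set B := (Matrix.of fun i j : Fin (p - 1) =>
        (if i.val % 2 = 0 then (1 : ℝ) else a) *
          (if i = j then 2
            else if i.val + 1 = j.val ∨ j.val + 1 = i.val then -1 else 0)) with hB
    have hne : B.charpoly ≠ 0 := B.charpoly_monic.ne_zero
    -- every root of a quadratic factor is an eigenvalue
    have hroot : ∀ j ∈ Finset.Icc 1 ((p - 1) / 2), ∀ l : ℝ,
        l ^ 2 - (2 + 2 * a) * l + 4 * a * Real.sin (Real.pi * j / p) ^ 2 = 0 →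
        B.charpoly.IsRoot l := by
      intro j hj l hl
      have hsinp : Real.sin (((p - 1) + 1 : ℕ) * (Real.pi * j / p)) = 0 := by
        rw [Nat.sub_add_cancel (by omega : 1 ≤ p)]
        rw [show (p:ℝ) * (Real.pi * j / p) = j * Real.pi by field_simp]
        exact Real.sin_nat_mul_pi j
      refine isRoot_charpoly_of_eig (p-1) B l
        (fun i => (if (i.val + 1) % 2 = 1 then -2 * Real.cos (Real.pi * j / p) else l - 2) *
          Real.sin ((i.val + 1 : ℕ) * (Real.pi * j / p))) ?_ ?_
      · intro hcon
        have h0 := congrFun hcon ⟨0, by omega⟩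
        simp only [Pi.zero_apply] at h0
        rw [if_pos (by norm_num)] at h0
        have hc := (facts j hj).2.2.1
        have hs := (facts j hj).1
        rw [show ((0 + 1 : ℕ) : ℝ) = 1 by norm_num, one_mul] at h0
        nlinarith [h0, hc, hs]
      · rw [hB]
        exact mulVec_eig (p-1) a (Real.pi * j / p) l hsinp hl
    -- the multiset of 2m roots
    set μ := (Finset.Icc 1 ((p - 1) / 2)).val.map (lpAux p a)
        + (Finset.Icc 1 ((p - 1) / 2)).val.map (lmAux p a) with hμ
    have hql : ∀ j ∈ Finset.Icc 1 ((p - 1) / 2),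
        (lpAux p a j) ^ 2 - (2 + 2 * a) * (lpAux p a j)
          + 4 * a * Real.sin (Real.pi * j / p) ^ 2 = 0 := by
      intro j hj
      have h := hrsq j hj
      simp only [lpAux, discAux] at h ⊢
      linear_combination h
    have hqm : ∀ j ∈ Finset.Icc 1 ((p - 1) / 2),
        (lmAux p a j) ^ 2 - (2 + 2 * a) * (lmAux p a j)
          + 4 * a * Real.sin (Real.pi * j / p) ^ 2 = 0 := by
      intro j hj
      have h := hrsq j hj
      simp only [lmAux, discAux] at h ⊢
      linear_combination h
    have hnodup : μ.Nodup := by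
      rw [hμ, Multiset.nodup_add]
      refine ⟨Multiset.Nodup.map_on ?_ (Finset.Icc 1 ((p - 1) / 2)).nodup,
        Multiset.Nodup.map_on ?_ (Finset.Icc 1 ((p - 1) / 2)).nodup, ?_⟩
      · intro x hx y hy hxy
        simp only [lpAux] at hxy
        exact hinj x hx y hy (by linarith)
      · intro x hx y hy hxy
        simp only [lmAux] at hxy
        exact hinj x hx y hy (by linarith)
      · rw [Multiset.disjoint_left]
        intro x hx hx'
        obtain ⟨j, hj, rfl⟩ := Multiset.mem_map.mp hx
        obtain ⟨k, hk, hkeq⟩ := Multiset.mem_map.mp hx'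
        have h1 := hrpos j hj
        have h2 := hrpos k hk
        simp only [lpAux, lmAux] at hkeq
        linarith
    have hsub : μ ⊆ B.charpoly.roots := by
      intro x hx
      rw [Polynomial.mem_roots hne]
      rw [hμ, Multiset.mem_add] at hx
      rcases hx with hx | hx
      · obtain ⟨j, hj, rfl⟩ := Multiset.mem_map.mp hx
        exact hroot j hj _ (hql j hj)
      · obtain ⟨j, hj, rfl⟩ := Multiset.mem_map.mp hx
        exact hroot j hj _ (hqm j hj)
    have hle : μ ≤ B.charpoly.roots := (Multiset.le_iff_subset hnodup).mpr hsub
    have hdvd : (μ.map fun x => X - C x).prod ∣ B.charpoly :=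
      (Multiset.prod_X_sub_C_dvd_iff_le_roots hne μ).mpr hle
    have hcard : Multiset.card μ = p - 1 := by
      rw [hμ]
      simp [Nat.card_Icc]
      omega
    have hmonicP : ((μ.map fun x => X - C x).prod).Monic :=
      Polynomial.monic_multiset_prod_of_monic _ _ (fun x _ => monic_X_sub_C x)
    have hdegP : ((μ.map fun x => X - C x).prod).natDegree = p - 1 := by
      rw [Polynomial.natDegree_multiset_prod_of_monic _ (fun x hx => by
        obtain ⟨y, _, rfl⟩ := Multiset.mem_map.mp hx
        exact monic_X_sub_C y)]
      simp [Multiset.map_map, Function.comp_def, natDegree_X_sub_C, hcard]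
    have heq : (μ.map fun x => X - C x).prod = B.charpoly := by
      refine Polynomial.eq_of_dvd_of_natDegree_le_of_leadingCoeff hdvd ?_ ?_
      · rw [hdegP, Matrix.charpoly_natDegree_eq_dim]
        simp
      · rw [hmonicP.leadingCoeff, B.charpoly_monic.leadingCoeff]
    rw [← heq, hμ]
    rw [Multiset.map_add, Multiset.prod_add, Multiset.map_map, Multiset.map_map]
    rw [show ((Finset.Icc 1 ((p - 1) / 2)).val.map ((fun x => X - C x) ∘ lpAux p a)).prod
        = ∏ j ∈ Finset.Icc 1 ((p - 1) / 2), (X - C (lpAux p a j))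
      from (Finset.prod_eq_multiset_prod _ _).symm]
    rw [show ((Finset.Icc 1 ((p - 1) / 2)).val.map ((fun x => X - C x) ∘ lmAux p a)).prod
        = ∏ j ∈ Finset.Icc 1 ((p - 1) / 2), (X - C (lmAux p a j))
      from (Finset.prod_eq_multiset_prod _ _).symm]
    rw [← Finset.prod_mul_distrib]
    refine Finset.prod_congr rfl ?_
    intro j hj
    have h1 : lpAux p a j + lmAux p a j = 2 + 2 * a := by
      simp only [lpAux, lmAux]; ring
    have h2 : lpAux p a j * lmAux p a j = 4 * a * Real.sin (Real.pi * j / p) ^ 2 := by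
      have h := hrsq j hj
      simp only [lpAux, lmAux, discAux] at h ⊢
      linear_combination -h
    rw [show (2 + 2*a : ℝ) = lpAux p a j + lmAux p a j from h1.symm,
      show (4 * a * Real.sin (Real.pi * j / p) ^ 2 : ℝ)
        = lpAux p a j * lmAux p a j from h2.symm, C_add, C_mul]
    ring1
  · -- the 2×2 statement
    intro j hj
    rw [Matrix.charpoly, Matrix.det_fin_two]
    have hsc : (4 * a * Real.sin (Real.pi * j / p) ^ 2 : ℝ)
        = 4 * a - 4 * a * Real.cos (Real.pi * j / p) ^ 2 := by
      linear_combination 4 * a * Real.sin_sq_add_cos_sq (Real.pi * j / p)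
    rw [hsc]
    simp only [Matrix.charmatrix_apply_eq,
      Matrix.charmatrix_apply_ne _ _ _ (by decide : (0 : Fin 2) ≠ 1),
      Matrix.charmatrix_apply_ne _ _ _ (by decide : (1 : Fin 2) ≠ 0)]
    simp [Matrix.cons_val_zero, Matrix.cons_val_one, Matrix.head_cons, C_add, C_mul, C_sub]
    ring_nf
    simp only [← C_pow, ← C_mul, ← C_add, ← C_sub]
    norm_num
    ring_nf
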